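/- Let (G,X) be a minimal topological dynamical system, let x₀ ∈ X and let d ≥ 1. Then C_G^[d](X) equals the closure of {g·x₀^[d] : g ∈ HK^[d]} and also equals the closure of {f·x^[d] : f ∈ F^[d], x ∈ X}. -/

import Mathlib

/-- Generators of the Host–Kra cube group: `[h]_F` for `F` a hyperface `{ω : ω i = a}`. -/
def hyperfaceGens (G : Type*) [Group G] (d : ℕ) : Set ((Fin d → Bool) → G) :=
  {g | ∃ (h : G) (i : Fin d) (a : Bool), g = fun ω => if ω i = a then h else 1}

/-- Generators of the face cube group: `[h]_F` for `F` an upper hyperface `{ω : ω i = 1}`. -/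
def upperFaceGens (G : Type*) [Group G] (d : ℕ) : Set ((Fin d → Bool) → G) :=
  {g | ∃ (h : G) (i : Fin d), g = fun ω => if ω i = true then h else 1}

/-- The Host–Kra cube group `HK^[d]`. -/
def HK (G : Type*) [Group G] (d : ℕ) : Subgroup ((Fin d → Bool) → G) :=
  Subgroup.closure (hyperfaceGens G d)

/-- The face cube group `F^[d]`. -/
def FG (G : Type*) [Group G] (d : ℕ) : Subgroup ((Fin d → Bool) → G) :=
  Subgroup.closure (upperFaceGens G d)

/-- Coordinatewise action of `G^[d]` on `X^[d]`. -/
def cubeAct {G X : Type*} [Group G] [MulAction G X] {d : ℕ}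
    (g : (Fin d → Bool) → G) (c : (Fin d → Bool) → X) : (Fin d → Bool) → X :=
  fun ω => g ω • c ω

/-- The dynamical cubespace `C_G^[d](X)`: the closure of the set of `HK^[d]`-translates
of constant configurations. -/
def cubeSpace (G X : Type*) [Group G] [MulAction G X] [TopologicalSpace X] (d : ℕ) :
    Set ((Fin d → Bool) → X) :=
  closure {c | ∃ g ∈ HK G d, ∃ x : X, c = cubeAct g (fun _ => x)}

/-- The lower corner `⌞^[d](x,y)`: value `y` at `1⃗`, value `x` elsewhere. -/
def lowerCorner {X : Type*} (d : ℕ) (x y : X) : (Fin d → Bool) → X :=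
  fun ω => if ω = (fun _ => true) then y else x

/-- The upper corner `⌝^[d](x,y)`: value `x` at `0⃗`, value `y` elsewhere. -/
def upperCorner {X : Type*} (d : ℕ) (x y : X) : (Fin d → Bool) → X :=
  fun ω => if ω = (fun _ => false) then x else y

/-- The nilpotent regionally proximal relation of order `d`. -/
def NRP (G X : Type*) [Group G] [MulAction G X] [TopologicalSpace X] (d : ℕ) :
    Set (X × X) :=
  {p | lowerCorner (d + 1) p.1 p.2 ∈ cubeSpace G X (d + 1)}

/-- `Y_x^[d](X)`: the closure of the `F^[d]`-orbit of the constant configuration `x^[d]`. -/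
def Yx (G : Type*) {X : Type*} [Group G] [MulAction G X] [TopologicalSpace X]
    (d : ℕ) (x : X) : Set ((Fin d → Bool) → X) :=
  closure {c | ∃ f ∈ FG G d, c = cubeAct f (fun _ => x)}

/-- `C_x^[d](X)`: cubes whose value at `0⃗` is `x`. -/
def Cx (G : Type*) {X : Type*} [Group G] [MulAction G X] [TopologicalSpace X]
    (d : ℕ) (x : X) : Set ((Fin d → Bool) → X) :=
  {c ∈ cubeSpace G X d | c (fun _ => false) = x}


section Aux

variable {G : Type*} [Group G] {d : ℕ}

lemma const_mem_HK (hd : 1 ≤ d) (k : G) :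
    (fun _ => k : (Fin d → Bool) → G) ∈ HK G d := by
  set i : Fin d := ⟨0, hd⟩
  have h1 : (fun ω => if ω i = true then k else 1) ∈ HK G d :=
    Subgroup.subset_closure ⟨k, i, true, rfl⟩
  have h2 : (fun ω => if ω i = false then k else 1) ∈ HK G d :=
    Subgroup.subset_closure ⟨k, i, false, rfl⟩
  have he : (fun _ => k : (Fin d → Bool) → G) =
      (fun ω => if ω i = true then k else 1) * (fun ω => if ω i = false then k else 1) := by
    funext ω; cases hb : ω i <;> simp [Pi.mul_apply, hb]
  rw [he]; exact mul_mem h1 h2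

lemma FG_le_HK : FG G d ≤ HK G d := by
  apply Subgroup.closure_le (HK G d) |>.2
  rintro g ⟨h, i, rfl⟩
  exact Subgroup.subset_closure ⟨h, i, true, rfl⟩

lemma conj_mem_FG {f : (Fin d → Bool) → G} (hf : f ∈ FG G d) (k : G) :
    (fun _ => k) * f * (fun _ => k)⁻¹ ∈ FG G d := by
  induction hf using Subgroup.closure_induction with
  | mem g hg =>
    obtain ⟨h, i, rfl⟩ := hg
    refine Subgroup.subset_closure ⟨k * h * k⁻¹, i, ?_⟩
    funext ω
    by_cases hb : ω i = true <;>
      simp [Pi.mul_apply, Pi.inv_apply, hb]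
  | one => simpa using one_mem (FG G d)
  | mul x y hx hy ihx ihy =>
    have : (fun _ => k) * (x * y) * (fun _ => k)⁻¹ =
        ((fun _ => k) * x * (fun _ => k)⁻¹) * ((fun _ => k) * y * (fun _ => k)⁻¹) := by
      group
    rw [this]; exact mul_mem ihx ihy
  | inv x hx ihx =>
    have : (fun _ => k) * x⁻¹ * (fun _ => k)⁻¹ =
        ((fun _ => k) * x * (fun _ => k)⁻¹)⁻¹ := by group
    rw [this]; exact inv_mem ihx

lemma HK_decomp {g : (Fin d → Bool) → G} (hg : g ∈ HK G d) :
    ∃ f ∈ FG G d, ∃ k : G, g = f * (fun _ => k) := by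
  induction hg using Subgroup.closure_induction with
  | mem g hg =>
    obtain ⟨h, i, a, rfl⟩ := hg
    cases a with
    | true =>
      refine ⟨_, Subgroup.subset_closure ⟨h, i, rfl⟩, 1, ?_⟩
      funext ω; simp [Pi.mul_apply]
    | false =>
      refine ⟨fun ω => if ω i = true then h⁻¹ else 1,
        Subgroup.subset_closure ⟨h⁻¹, i, rfl⟩, h, ?_⟩
      funext ω
      cases hb : ω i <;> simp [Pi.mul_apply, hb]
  | one =>
    refine ⟨1, one_mem _, 1, ?_⟩
    funext ω; simp [Pi.mul_apply]
  | mul x y hx hy ihx ihy =>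
    obtain ⟨f₁, hf₁, k₁, rfl⟩ := ihx
    obtain ⟨f₂, hf₂, k₂, rfl⟩ := ihy
    refine ⟨f₁ * ((fun _ => k₁) * f₂ * (fun _ => k₁)⁻¹),
      mul_mem hf₁ (conj_mem_FG hf₂ k₁), k₁ * k₂, ?_⟩
    have : (fun _ => (k₁ * k₂) : (Fin d → Bool) → G) =
        (fun _ => k₁) * (fun _ => k₂) := rfl
    rw [this]; group
  | inv x hx ihx =>
    obtain ⟨f, hf, k, rfl⟩ := ihx
    refine ⟨(fun _ => k)⁻¹ * f⁻¹ * (fun _ => k), ?_, k⁻¹, ?_⟩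
    · have : (fun _ => k : (Fin d → Bool) → G)⁻¹ * f⁻¹ * (fun _ => k) =
          (fun _ => k⁻¹) * f⁻¹ * (fun _ => k⁻¹)⁻¹ := by
        funext ω; simp [Pi.mul_apply, Pi.inv_apply]
      rw [this]; exact conj_mem_FG (inv_mem hf) k⁻¹
    · have hki : (fun _ => k⁻¹ : (Fin d → Bool) → G) = (fun _ => k)⁻¹ := by
        funext ω; simp [Pi.inv_apply]
      rw [hki]; group

lemma cubeAct_mul {X : Type*} [MulAction G X] (g h : (Fin d → Bool) → G)
    (c : (Fin d → Bool) → X) : cubeAct (g * h) c = cubeAct g (cubeAct h c) := by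
  funext ω; simp [cubeAct, Pi.mul_apply, mul_smul]

lemma cubeAct_const {X : Type*} [MulAction G X] (g : (Fin d → Bool) → G)
    (k : G) (x : X) :
    cubeAct (g * (fun _ => k)) (fun _ => x) = cubeAct g (fun _ => k • x) := by
  funext ω; simp [cubeAct, Pi.mul_apply, mul_smul]

end Aux

/-- For `(G,X)` minimal, `C_G^[d](X)` is the closure of the `HK^[d]`-orbit of any
constant configuration `x₀^[d]`, and also the closure of the `F^[d]`-translates of
all constant configurations. -/
theorem cubeSpace_eq_orbit_closures
    {G X : Type*} [Group G] [TopologicalSpace G] [IsTopologicalGroup G]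
    [TopologicalSpace X] [CompactSpace X] [T2Space X]
    [MulAction G X] [ContinuousSMul G X]
    {d : ℕ} (hd : 1 ≤ d)
    (hmin : ∀ x : X, Dense (MulAction.orbit G x)) (x₀ : X) :
    cubeSpace G X d = closure {c | ∃ g ∈ HK G d, c = cubeAct g (fun _ => x₀)} ∧
    cubeSpace G X d = closure {c | ∃ f ∈ FG G d, ∃ x : X, c = cubeAct f (fun _ => x)} := by
  have key1 : {c | ∃ g ∈ HK G d, ∃ x : X, c = cubeAct g (fun _ => x)} ⊆
      closure {c | ∃ g ∈ HK G d, c = cubeAct g (fun _ => x₀)} := by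
    rintro c ⟨g, hg, x, rfl⟩
    have hcont : Continuous fun y : X => cubeAct g (fun _ => y) := by
      apply continuous_pi; intro ω
      exact (continuous_const_smul (g ω)).comp continuous_id
    have hx : x ∈ closure (MulAction.orbit G x₀) := (hmin x₀).closure_eq ▸ trivial
    have himg : (fun y : X => cubeAct g (fun _ => y)) '' (MulAction.orbit G x₀) ⊆
        {c | ∃ g ∈ HK G d, c = cubeAct g (fun _ => x₀)} := by
      rintro _ ⟨_, ⟨k, rfl⟩, rfl⟩
      exact ⟨g * (fun _ => k), mul_mem hg (const_mem_HK hd k), (cubeAct_const g k x₀).symm⟩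
    have h1 : cubeAct g (fun _ => x) ∈
        (fun y : X => cubeAct g (fun _ => y)) '' closure (MulAction.orbit G x₀) := ⟨x, hx, rfl⟩
    exact closure_mono himg (image_closure_subset_closure_image hcont h1)
  have seteq : {c : (Fin d → Bool) → X | ∃ g ∈ HK G d, ∃ x : X, c = cubeAct g (fun _ => x)} =
      {c | ∃ f ∈ FG G d, ∃ x : X, c = cubeAct f (fun _ => x)} := by
    ext c; constructor
    · rintro ⟨g, hg, x, rfl⟩
      obtain ⟨f, hf, k, rfl⟩ := HK_decomp hg
      exact ⟨f, hf, k • x, cubeAct_const f k x⟩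
    · rintro ⟨f, hf, x, rfl⟩
      exact ⟨f, FG_le_HK hf, x, rfl⟩
  constructor
  · refine le_antisymm (closure_minimal key1 isClosed_closure) (closure_mono ?_)
    rintro c ⟨g, hg, rfl⟩
    exact ⟨g, hg, x₀, rfl⟩
  · rw [cubeSpace, seteq]
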